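/- arXiv:2508.20059 — 2 statements merged into one kernel-verified Lean document; each statement's English description precedes it below -/
import Mathlib

section
/- The infimum of ε·KL(π‖μ1⊗μ2) − ∫_{X×Y} ℓ dπ, taken over all Borel probability measures π on X×Y whose first marginal equals μ1, is equal to −∫_X B dμ1 where B(x) = ε log ∫_Y exp(ℓ(x,y)/ε) dμ2(y). -/
open MeasureTheory Classical
open scoped ENNReal

/-- Kullback–Leibler divergence: `∫ log(dp/dq) dp` when `p ≪ q` (and the
integrand is `p`-integrable), and `+∞` otherwise. -/
noncomputable def klDiv {Ω : Type*} [MeasurableSpace Ω] (p q : Measure Ω) : EReal :=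
  if p ≪ q ∧ Integrable (fun ω => Real.log (p.rnDeriv q ω).toReal) p then
    ((∫ ω, Real.log (p.rnDeriv q ω).toReal ∂p : ℝ) : EReal)
  else ⊤

/-- Nonnegativity of the Kullback–Leibler divergence (Gibbs' inequality). -/
lemma kl_nonneg_aux {Ω : Type*} [MeasurableSpace Ω] (p q : Measure Ω)
    [IsProbabilityMeasure p] [IsProbabilityMeasure q] (hac : p ≪ q)
    (hint : Integrable (llr p q) p) : 0 ≤ ∫ x, llr p q x ∂p := by
  set φ : Ω → ℝ := fun x => ((p.rnDeriv q x).toReal)⁻¹ with hφ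
  have hpos : ∀ᵐ x ∂p, 0 < p.rnDeriv q x := Measure.rnDeriv_pos hac
  have hlt : ∀ᵐ x ∂p, p.rnDeriv q x < ∞ := hac.ae_le (Measure.rnDeriv_lt_top p q)
  have hφmeas : Measurable φ := (Measure.measurable_rnDeriv p q).ennreal_toReal.inv
  have hφnn : 0 ≤ᵐ[p] φ := Filter.Eventually.of_forall fun x =>
    inv_nonneg.2 ENNReal.toReal_nonneg
  have hlint : ∫⁻ x, ENNReal.ofReal (φ x) ∂p ≤ 1 := by
    have heq : (fun x => ENNReal.ofReal (φ x)) =ᵐ[p] fun x => (p.rnDeriv q x)⁻¹ := by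
      filter_upwards [hpos, hlt] with x h1 _
      rw [hφ]
      simp only []
      rw [← ENNReal.toReal_inv, ENNReal.ofReal_toReal (ENNReal.inv_ne_top.2 h1.ne')]
    rw [lintegral_congr_ae heq]
    calc ∫⁻ x, (p.rnDeriv q x)⁻¹ ∂p
        = ∫⁻ x, (p.rnDeriv q * fun y => (p.rnDeriv q y)⁻¹) x ∂q := by
          rw [show ∫⁻ x, (p.rnDeriv q x)⁻¹ ∂p
              = ∫⁻ x, (p.rnDeriv q x)⁻¹ ∂(q.withDensity (p.rnDeriv q)) by
            rw [Measure.withDensity_rnDeriv_eq p q hac]]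
          exact lintegral_withDensity_eq_lintegral_mul q (Measure.measurable_rnDeriv p q)
            (Measure.measurable_rnDeriv p q).inv
      _ ≤ ∫⁻ _, 1 ∂q := lintegral_mono fun x => ENNReal.mul_inv_le_one _
      _ = 1 := by simp
  have hφint : Integrable φ p := by
    refine ⟨hφmeas.aestronglyMeasurable, ?_⟩
    rw [hasFiniteIntegral_iff_ofReal hφnn]
    exact lt_of_le_of_lt hlint ENNReal.one_lt_top
  have hφle : ∫ x, φ x ∂p ≤ 1 := by
    rw [integral_eq_lintegral_of_nonneg_ae hφnn hφmeas.aestronglyMeasurable]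
    calc (∫⁻ x, ENNReal.ofReal (φ x) ∂p).toReal
        ≤ (1 : ℝ≥0∞).toReal := ENNReal.toReal_mono ENNReal.one_ne_top hlint
      _ = 1 := by simp
  have hptw : ∀ᵐ x ∂p, 1 - φ x ≤ llr p q x := by
    filter_upwards [hpos, hlt] with x h1 h2
    have ht : 0 < (p.rnDeriv q x).toReal := ENNReal.toReal_pos h1.ne' h2.ne
    have hlog := Real.log_le_sub_one_of_pos (inv_pos.2 ht)
    rw [Real.log_inv] at hlog
    show 1 - ((p.rnDeriv q x).toReal)⁻¹ ≤ Real.log (p.rnDeriv q x).toReal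
    linarith
  have hmono := integral_mono_ae (f := fun x => 1 - φ x) (g := llr p q)
    ((integrable_const (1 : ℝ)).sub hφint) hint hptw
  rw [integral_sub (integrable_const 1) hφint] at hmono
  simp only [integral_const, measure_univ, ENNReal.toReal_one, probReal_univ, smul_eq_mul, one_mul] at hmono
  linarith

/-- The infimum of `ε·KL(π‖μ1⊗μ2) − ∫ ℓ dπ` over probability measures `π` on
`X × Y` with first marginal `μ1` equals `−∫ B dμ1`, where
`B x = ε log ∫ exp(ℓ(x,y)/ε) dμ2(y)`. -/
theorem mcot_dual_inf_value
    {X Y : Type*} [MetricSpace X] [CompactSpace X] [MeasurableSpace X] [BorelSpace X]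
    [MetricSpace Y] [CompactSpace Y] [MeasurableSpace Y] [BorelSpace Y]
    (μ1 : Measure X) [IsProbabilityMeasure μ1] (μ2 : Measure Y) [IsProbabilityMeasure μ2]
    (ε : ℝ) (hε : 0 < ε)
    (ℓ : X × Y → ℝ) (hℓ : Continuous ℓ) (hbd : ∃ C : ℝ, ∀ p, |ℓ p| ≤ C)
    (B : X → ℝ) (hB : ∀ x, B x = ε * Real.log (∫ y, Real.exp (ℓ (x, y) / ε) ∂μ2)) :
    (⨅ (π : Measure (X × Y)) (_ : IsProbabilityMeasure π) (_ : π.map Prod.fst = μ1),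
        ((ε : EReal) * klDiv π (μ1.prod μ2) - ((∫ p, ℓ p ∂π : ℝ) : EReal)))
      = ((-∫ x, B x ∂μ1 : ℝ) : EReal) := by
  obtain ⟨C, hC⟩ := hbd
  set base : Measure (X × Y) := μ1.prod μ2 with hbase
  -- basic objects
  set Z : X → ℝ := fun x => ∫ y, Real.exp (ℓ (x, y) / ε) ∂μ2 with hZ
  set g : X × Y → ℝ := fun p => Real.exp ((ℓ p - B p.1) / ε) with hg
  set dens : X × Y → ℝ≥0∞ := fun p => ENNReal.ofReal (g p) with hdens
  have hexp_cont : Continuous fun p : X × Y => Real.exp (ℓ p / ε) :=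
    Real.continuous_exp.comp (hℓ.div_const ε)
  -- integrability of the inner exponential
  have hexp_int : ∀ x : X, Integrable (fun y => Real.exp (ℓ (x, y) / ε)) μ2 := by
    intro x
    refine Integrable.mono' (integrable_const (Real.exp (C / ε)))
      ((hexp_cont.comp (Continuous.prodMk_right x)).aestronglyMeasurable)
      (Filter.Eventually.of_forall fun y => ?_)
    rw [Real.norm_eq_abs, abs_of_pos (Real.exp_pos _)]
    exact Real.exp_le_exp.2 ((div_le_div_iff_of_pos_right hε).2 ((abs_le.1 (hC (x, y))).2))
  -- bounds on Z
  have hZlb : ∀ x, Real.exp (-(C / ε)) ≤ Z x := by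
    intro x
    calc Real.exp (-(C / ε)) = ∫ _, Real.exp (-(C / ε)) ∂μ2 := by simp
      _ ≤ Z x := by
          refine integral_mono (integrable_const _) (hexp_int x) fun y => ?_
          refine Real.exp_le_exp.2 ?_
          rw [show -(C / ε) = (-C) / ε by ring]
          exact (div_le_div_iff_of_pos_right hε).2 ((abs_le.1 (hC (x, y))).1)
  have hZub : ∀ x, Z x ≤ Real.exp (C / ε) := by
    intro x
    calc Z x ≤ ∫ _, Real.exp (C / ε) ∂μ2 := by
          refine integral_mono (hexp_int x) (integrable_const _) fun y => ?_
          exact Real.exp_le_exp.2 ((div_le_div_iff_of_pos_right hε).2 ((abs_le.1 (hC (x, y))).2))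
      _ = Real.exp (C / ε) := by simp
  have hZpos : ∀ x, 0 < Z x := fun x => lt_of_lt_of_le (Real.exp_pos _) (hZlb x)
  -- measurability
  have hZmeas : Measurable Z :=
    (hexp_cont.stronglyMeasurable.integral_prod_right').measurable
  have hBmeas : Measurable B := by
    have hBeq : B = fun x => ε * Real.log (Z x) := funext hB
    rw [hBeq]
    exact (Real.measurable_log.comp hZmeas).const_mul ε
  have hgmeas : Measurable g :=
    Real.measurable_exp.comp ((hℓ.measurable.sub (hBmeas.comp measurable_fst)).div_const ε)
  have hdensmeas : Measurable dens := ENNReal.measurable_ofReal.comp hgmeas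
  -- bound on B
  have hBbd : ∀ x, |B x| ≤ C := by
    intro x
    have h1 : Real.log (Z x) ≤ C / ε := by
      have := Real.log_le_log (hZpos x) (hZub x)
      rwa [Real.log_exp] at this
    have h2 : -(C / ε) ≤ Real.log (Z x) := by
      have := Real.log_le_log (Real.exp_pos _) (hZlb x)
      rwa [Real.log_exp] at this
    rw [hB x, abs_mul, abs_of_pos hε]
    have : |Real.log (Z x)| ≤ C / ε := abs_le.2 ⟨h2, h1⟩
    calc ε * |Real.log (Z x)| ≤ ε * (C / ε) := by nlinarith
      _ = C := by field_simp
  -- the inner real integral of g is 1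
  have key1 : ∀ x, ∫ y, g (x, y) ∂μ2 = 1 := by
    intro x
    have h1 : ∀ y, g (x, y) = Real.exp (ℓ (x, y) / ε) / Z x := by
      intro y
      show Real.exp ((ℓ (x, y) - B x) / ε) = _
      rw [sub_div, Real.exp_sub]
      congr 1
      rw [hB x, mul_div_cancel_left₀ _ hε.ne', Real.exp_log (hZpos x)]
    simp_rw [h1]
    rw [integral_div]
    exact div_self (hZpos x).ne'
  -- integrability of g (x, ·)
  have hgint : ∀ x, Integrable (fun y => g (x, y)) μ2 := by
    intro x
    refine Integrable.mono' (integrable_const (Real.exp ((C + C) / ε)))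
      ((hgmeas.comp (measurable_prodMk_left)).aestronglyMeasurable)
      (Filter.Eventually.of_forall fun y => ?_)
    rw [Real.norm_eq_abs, abs_of_pos (Real.exp_pos _)]
    refine Real.exp_le_exp.2 ((div_le_div_iff_of_pos_right hε).2 ?_)
    have h1 := abs_le.1 (hC (x, y))
    have h2 := abs_le.1 (hBbd x)
    simp only []
    linarith
  -- lintegral version
  have key2 : ∀ x, ∫⁻ y, dens (x, y) ∂μ2 = 1 := by
    intro x
    rw [show (fun y => dens (x, y)) = fun y => ENNReal.ofReal (g (x, y)) from rfl,
      ← ofReal_integral_eq_lintegral_ofReal (hgint x)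
        (Filter.Eventually.of_forall fun y => (Real.exp_pos _).le),
      key1 x, ENNReal.ofReal_one]
  -- the optimal measure
  set πs : Measure (X × Y) := base.withDensity dens with hπs
  have hπs_ac : πs ≪ base := withDensity_absolutelyContinuous _ _
  have hπs_univ : πs Set.univ = 1 := by
    rw [hπs, withDensity_apply _ MeasurableSet.univ, Measure.restrict_univ, hbase,
      lintegral_prod _ hdensmeas.aemeasurable]
    simp_rw [key2]
    simp
  have hπs_prob : IsProbabilityMeasure πs := ⟨hπs_univ⟩
  have hπs_marg : πs.map Prod.fst = μ1 := by
    ext s hs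
    rw [Measure.map_apply measurable_fst hs]
    have hpre : Prod.fst ⁻¹' s = s ×ˢ (Set.univ : Set Y) := by
      ext p; simp [Set.mem_prod]
    rw [hpre, hπs, withDensity_apply _ (hs.prod MeasurableSet.univ), hbase,
      ← Measure.prod_restrict, Measure.restrict_univ,
      lintegral_prod _ hdensmeas.aemeasurable]
    simp_rw [key2]
    simp [lintegral_one, Measure.restrict_apply_univ]
  have hrn : πs.rnDeriv base =ᵐ[base] dens := Measure.rnDeriv_withDensity base hdensmeas
  -- integrability of the bounded function (ℓ - B ∘ fst)/ε over any probability measure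
  have hIbdd : ∀ (π : Measure (X × Y)), IsProbabilityMeasure π →
      Integrable (fun p => (ℓ p - B p.1) / ε) π := by
    intro π hπ
    haveI := hπ
    refine Integrable.mono' (integrable_const ((C + C) / ε))
      (((hℓ.measurable.sub (hBmeas.comp measurable_fst)).div_const ε).aestronglyMeasurable)
      (Filter.Eventually.of_forall fun p => ?_)
    rw [Real.norm_eq_abs, abs_div, abs_of_pos hε]
    refine (div_le_div_iff_of_pos_right hε).2 ?_
    have h1 := abs_le.1 (hC p)
    have h2 := abs_le.1 (hBbd p.1)
    rw [abs_le]
    constructor <;> linarith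
  have hIℓ : ∀ (π : Measure (X × Y)), IsProbabilityMeasure π → Integrable ℓ π := by
    intro π hπ
    haveI := hπ
    exact Integrable.mono' (integrable_const C) hℓ.measurable.aestronglyMeasurable
      (Filter.Eventually.of_forall fun p => by rw [Real.norm_eq_abs]; exact hC p)
  have hIB : ∀ (π : Measure (X × Y)), IsProbabilityMeasure π →
      Integrable (fun p : X × Y => B p.1) π := by
    intro π hπ
    haveI := hπ
    exact Integrable.mono' (integrable_const C)
      ((hBmeas.comp measurable_fst).aestronglyMeasurable)
      (Filter.Eventually.of_forall fun p => by rw [Real.norm_eq_abs]; exact hBbd p.1)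
  -- B integral transfers along the first marginal
  have hmargint : ∀ (π : Measure (X × Y)), π.map Prod.fst = μ1 →
      ∫ p, B p.1 ∂π = ∫ x, B x ∂μ1 := by
    intro π hm
    rw [← hm, integral_map measurable_fst.aemeasurable hBmeas.aestronglyMeasurable]
  -- llr of πs
  have hllr_s : llr πs base =ᵐ[πs] fun p => (ℓ p - B p.1) / ε := by
    filter_upwards [hπs_ac.ae_le hrn] with p hp
    rw [llr, hp]
    show Real.log (ENNReal.ofReal (g p)).toReal = _
    rw [ENNReal.toReal_ofReal (Real.exp_pos _).le]
    exact Real.log_exp _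
  have hint_s : Integrable (llr πs base) πs := (hIbdd πs hπs_prob).congr hllr_s.symm
  -- value at πs
  have hklval : klDiv πs base = ((∫ p, (ℓ p - B p.1) / ε ∂πs : ℝ) : EReal) := by
    unfold klDiv
    rw [if_pos ⟨hπs_ac, hint_s⟩]
    exact congrArg _ (integral_congr_ae hllr_s)
  have hval_s : (ε : EReal) * klDiv πs base - ((∫ p, ℓ p ∂πs : ℝ) : EReal)
      = ((-∫ x, B x ∂μ1 : ℝ) : EReal) := by
    rw [hklval, ← EReal.coe_mul, ← EReal.coe_sub]
    congr 1
    rw [show (fun p => (ℓ p - B p.1) / ε) = fun p => (ℓ p - B p.1) / ε from rfl]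
    rw [integral_div, integral_sub (hIℓ πs hπs_prob) (hIB πs hπs_prob),
      hmargint πs hπs_marg]
    field_simp
    ring
  refine le_antisymm ?_ ?_
  · exact iInf_le_of_le πs (iInf_le_of_le hπs_prob (iInf_le_of_le hπs_marg hval_s.le))
  · refine le_iInf fun π => le_iInf fun hπprob => le_iInf fun hπmarg => ?_
    haveI := hπprob
    by_cases hcase : π ≪ base ∧
        Integrable (fun ω => Real.log (π.rnDeriv base ω).toReal) π
    · obtain ⟨hac, hint⟩ := hcase
      have hint' : Integrable (llr π base) π := hint
      have hne0 : ∀ᵐ p ∂base, dens p ≠ 0 :=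
        Filter.Eventually.of_forall fun p => by
          simp only [hdens, ne_eq, ENNReal.ofReal_eq_zero, not_le]
          exact Real.exp_pos _
      have hnetop : ∀ᵐ p ∂base, dens p ≠ ∞ :=
        Filter.Eventually.of_forall fun p => ENNReal.ofReal_ne_top
      have hbase_ac_s : base ≪ πs :=
        withDensity_absolutelyContinuous' hdensmeas.aemeasurable hne0
      have hacs : π ≪ πs := hac.trans hbase_ac_s
      have hrn2 : π.rnDeriv πs =ᵐ[π] fun p => (dens p)⁻¹ * π.rnDeriv base p :=
        hac.ae_le (Measure.rnDeriv_withDensity_right π base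
          hdensmeas.aemeasurable hne0 hnetop)
      haveI : SigmaFinite base := hbase ▸ inferInstance
      have hpos : ∀ᵐ p ∂π, 0 < π.rnDeriv base p := Measure.rnDeriv_pos hac
      have hlt : ∀ᵐ p ∂π, π.rnDeriv base p < ∞ := hac.ae_le (Measure.rnDeriv_lt_top π base)
      have hllr2 : llr π πs =ᵐ[π] fun p => llr π base p - (ℓ p - B p.1) / ε := by
        filter_upwards [hrn2, hpos, hlt] with p h1 h2 h3
        rw [llr, h1, ENNReal.toReal_mul]
        have htR : (0 : ℝ) < (π.rnDeriv base p).toReal := ENNReal.toReal_pos h2.ne' h3.ne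
        have hdR : ((dens p)⁻¹).toReal = (g p)⁻¹ := by
          rw [ENNReal.toReal_inv]
          congr 1
          exact ENNReal.toReal_ofReal (Real.exp_pos _).le
        rw [hdR, Real.log_mul (inv_ne_zero (Real.exp_pos _).ne') htR.ne', Real.log_inv]
        have : Real.log (g p) = (ℓ p - B p.1) / ε := Real.log_exp _
        rw [this, llr]
        ring
      have hint2 : Integrable (llr π πs) π :=
        (hint'.sub (hIbdd π hπprob)).congr hllr2.symm
      have h0 : 0 ≤ ∫ p, llr π πs p ∂π := kl_nonneg_aux π πs hacs hint2
      rw [integral_congr_ae hllr2, integral_sub hint' (hIbdd π hπprob)] at h0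
      have hsubint : ∫ p, (ℓ p - B p.1) / ε ∂π
          = (∫ p, ℓ p ∂π - ∫ x, B x ∂μ1) / ε := by
        rw [integral_div, integral_sub (hIℓ π hπprob) (hIB π hπprob), hmargint π hπmarg]
      rw [hsubint] at h0
      -- conclude
      unfold klDiv
      rw [if_pos ⟨hac, hint⟩, ← EReal.coe_mul, ← EReal.coe_sub, EReal.coe_le_coe_iff]
      have hll : (∫ p, ℓ p ∂π - ∫ x, B x ∂μ1) ≤ ε * ∫ p, llr π base p ∂π := by
        have := (div_le_iff₀ hε).1 (by linarith : (∫ p, ℓ p ∂π - ∫ x, B x ∂μ1) / ε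
          ≤ ∫ p, llr π base p ∂π)
        linarith
      have hllr_eq : ∫ ω, Real.log (π.rnDeriv base ω).toReal ∂π = ∫ p, llr π base p ∂π := rfl
      rw [hllr_eq]
      linarith
    · unfold klDiv
      rw [if_neg hcase, EReal.coe_mul_top_of_pos hε, EReal.top_sub_coe]
      exact le_top
end

section
/- Let J : ℝ^A → ℝ be defined by J(ζ) = ∫_X log( ∫_Y exp( ζᵀf(y) − ε^{-1} c(x,y) ) dμ2(y) ) dμ1(x). If for every nonzero v ∈ ℝ^A the function y ↦ vᵀf(y) is not μ2-almost everywhere equal to a constant, then J is strictly convex on ℝ^A. -/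
open MeasureTheory



lemma cont_integrable {Z : Type*} [MetricSpace Z] [CompactSpace Z] [MeasurableSpace Z]
    [BorelSpace Z] (μ : Measure Z) [IsFiniteMeasure μ] {g : Z → ℝ} (hg : Continuous g) :
    Integrable g μ := by
  have := hg.continuousOn.integrableOn_compact (μ := μ) isCompact_univ
  rwa [integrableOn_univ] at this

lemma integral_lt_of_forall_lt {Z : Type*} [MeasurableSpace Z] {μ : Measure Z}
    [IsProbabilityMeasure μ] {g h : Z → ℝ} (hg : Integrable g μ) (hh : Integrable h μ)
    (hlt : ∀ z, g z < h z) : ∫ z, g z ∂μ < ∫ z, h z ∂μ := by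
  have hnn : 0 ≤ fun z => h z - g z := fun z => by simp only [Pi.zero_apply]; linarith [hlt z]
  have hpos : 0 < ∫ z, (h z - g z) ∂μ := by
    rcases (integral_nonneg hnn).lt_or_eq with hp | hp
    · exact hp
    · exfalso
      have h0 : (fun z => h z - g z) =ᵐ[μ] 0 :=
        (integral_eq_zero_iff_of_nonneg hnn (hh.sub hg)).mp hp.symm
      haveI : (ae μ).NeBot := inferInstance
      obtain ⟨z, hz⟩ := h0.exists
      have : h z - g z = 0 := hz
      linarith [hlt z]
  rw [integral_sub hh hg] at hpos
  linarith

lemma log_integral_exp_combo_lt {Y : Type*} [MetricSpace Y] [CompactSpace Y]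
    [MeasurableSpace Y] [BorelSpace Y] (μ : Measure Y) [IsProbabilityMeasure μ]
    {A B : Y → ℝ} (hA : Continuous A) (hB : Continuous B)
    {t s : ℝ} (ht : 0 < t) (hs : 0 < s) (hts : t + s = 1)
    (hne : ¬ ∃ k : ℝ, ∀ᵐ y ∂μ, A y - B y = k) :
    Real.log (∫ y, Real.exp (t * A y + s * B y) ∂μ) <
      t * Real.log (∫ y, Real.exp (A y) ∂μ) + s * Real.log (∫ y, Real.exp (B y) ∂μ) := by
  have hiA : Integrable (fun y => Real.exp (A y)) μ := cont_integrable μ (Real.continuous_exp.comp hA)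
  have hiB : Integrable (fun y => Real.exp (B y)) μ := cont_integrable μ (Real.continuous_exp.comp hB)
  set IA := ∫ y, Real.exp (A y) ∂μ with hIA
  set IB := ∫ y, Real.exp (B y) ∂μ with hIB
  have hIApos : 0 < IA := integral_exp_pos hiA
  have hIBpos : 0 < IB := integral_exp_pos hiB
  set a := Real.log IA with ha
  set b := Real.log IB with hb
  set A' : Y → ℝ := fun y => A y - a with hA'
  set B' : Y → ℝ := fun y => B y - b with hB'
  have hA'c : Continuous A' := hA.sub continuous_const
  have hB'c : Continuous B' := hB.sub continuous_const
  have hintA' : ∫ y, Real.exp (A' y) ∂μ = 1 := by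
    simp only [hA', Real.exp_sub]
    rw [integral_div, Real.exp_log hIApos]
    exact div_self hIApos.ne'
  have hintB' : ∫ y, Real.exp (B' y) ∂μ = 1 := by
    simp only [hB', Real.exp_sub]
    rw [integral_div, Real.exp_log hIBpos]
    exact div_self hIBpos.ne'
  -- the AM-GM gap function
  set g : Y → ℝ := fun y => t * Real.exp (A' y) + s * Real.exp (B' y)
      - Real.exp (t * A' y + s * B' y) with hg
  have hgc : Continuous g := by
    apply Continuous.sub
    · exact ((continuous_const.mul (Real.continuous_exp.comp hA'c)).add
        (continuous_const.mul (Real.continuous_exp.comp hB'c)))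
    · exact Real.continuous_exp.comp ((continuous_const.mul hA'c).add (continuous_const.mul hB'c))
  have hgnn : ∀ y, 0 ≤ g y := by
    intro y
    have := convexOn_exp.2 (Set.mem_univ (A' y)) (Set.mem_univ (B' y)) ht.le hs.le hts
    simp only [smul_eq_mul] at this
    simp only [hg]; linarith
  have hgi : Integrable g μ := cont_integrable μ hgc
  have hgpos : 0 < ∫ y, g y ∂μ := by
    rcases (integral_nonneg (f := g) hgnn).lt_or_eq with hp | hp
    · exact hp
    · exfalso
      have h0 : g =ᵐ[μ] 0 :=
        (integral_eq_zero_iff_of_nonneg (fun y => by simpa using hgnn y) hgi).mp hp.symm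
      apply hne
      refine ⟨a - b, ?_⟩
      filter_upwards [h0] with y hy
      have hy0 : g y = 0 := hy
      have heq : A' y = B' y := by
        by_contra hne'
        have := strictConvexOn_exp.2 (Set.mem_univ (A' y)) (Set.mem_univ (B' y)) hne' ht hs hts
        simp only [smul_eq_mul] at this
        simp only [hg] at hy0; linarith
      simp only [hA', hB'] at heq
      linarith
  -- integral of exp of combination of A', B'
  have hcomb : ∫ y, Real.exp (t * A' y + s * B' y) ∂μ = 1 - ∫ y, g y ∂μ := by
    have h1 : Integrable (fun y => t * Real.exp (A' y) + s * Real.exp (B' y)) μ :=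
      cont_integrable μ ((continuous_const.mul (Real.continuous_exp.comp hA'c)).add
        (continuous_const.mul (Real.continuous_exp.comp hB'c)))
    have := integral_sub h1 hgi
    have h2 : (fun y => t * Real.exp (A' y) + s * Real.exp (B' y) - g y)
        = fun y => Real.exp (t * A' y + s * B' y) := by
      funext y; simp only [hg]; ring
    rw [h2] at this
    rw [this]
    have hiA' : Integrable (fun y => t * Real.exp (A' y)) μ :=
      cont_integrable μ (continuous_const.mul (Real.continuous_exp.comp hA'c))
    have hiB' : Integrable (fun y => s * Real.exp (B' y)) μ :=
      cont_integrable μ (continuous_const.mul (Real.continuous_exp.comp hB'c))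
    rw [integral_add hiA' hiB', integral_const_mul, integral_const_mul, hintA', hintB']
    rw [mul_one, mul_one, hts]
  -- conclude
  have hpos2 : 0 < ∫ y, Real.exp (t * A y + s * B y) ∂μ :=
    integral_exp_pos (cont_integrable μ (Real.continuous_exp.comp
      ((continuous_const.mul hA).add (continuous_const.mul hB))))
  have hkey : ∫ y, Real.exp (t * A y + s * B y) ∂μ
      = Real.exp (t * a + s * b) * (1 - ∫ y, g y ∂μ) := by
    rw [← hcomb, ← integral_const_mul]
    congr 1; funext y
    rw [← Real.exp_add]
    congr 1
    simp only [hA', hB']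
    ring
  have hlt1 : ∫ y, Real.exp (t * A y + s * B y) ∂μ < Real.exp (t * a + s * b) := by
    rw [hkey]
    nlinarith [Real.exp_pos (t * a + s * b)]
  calc Real.log (∫ y, Real.exp (t * A y + s * B y) ∂μ)
      < Real.log (Real.exp (t * a + s * b)) := Real.log_lt_log hpos2 hlt1
    _ = t * a + s * b := Real.log_exp _
    _ = t * Real.log IA + s * Real.log IB := by rw [ha, hb]

/-- If no nonzero linear combination of the moment functions `f` is
`μ2`-almost everywhere constant, then the dual function
`J(ζ) = ∫ log(∫ exp(ζᵀf(y) − ε⁻¹ c(x,y)) dμ2(y)) dμ1(x)` is strictly convex. -/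
theorem mcot_dual_strictly_convex
    {X Y : Type*} [MetricSpace X] [CompactSpace X] [MeasurableSpace X] [BorelSpace X]
    [MetricSpace Y] [CompactSpace Y] [MeasurableSpace Y] [BorelSpace Y]
    (μ1 : Measure X) [IsProbabilityMeasure μ1] (μ2 : Measure Y) [IsProbabilityMeasure μ2]
    (ε : ℝ) (hε : 0 < ε)
    (c : X × Y → ℝ) (hc : Continuous c) (hc0 : ∀ p, 0 ≤ c p)
    (A : ℕ) (f : Y → Fin A → ℝ) (hf : Continuous f)
    (J : (Fin A → ℝ) → ℝ)
    (hJ : ∀ ζ, J ζ = ∫ x, Real.log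
      (∫ y, Real.exp ((∑ a, ζ a * f y a) - ε⁻¹ * c (x, y)) ∂μ2) ∂μ1)
    (hnd : ∀ v : Fin A → ℝ, v ≠ 0 → ¬ ∃ k : ℝ, ∀ᵐ y ∂μ2, (∑ a, v a * f y a) = k) :
    StrictConvexOn ℝ Set.univ J := by
  -- basic continuity facts
  have hsum : ∀ ζ : Fin A → ℝ, Continuous fun y => ∑ a, ζ a * f y a := fun ζ =>
    continuous_finset_sum _ fun a _ => continuous_const.mul ((continuous_apply a).comp hf)
  have hcy : ∀ x : X, Continuous fun y => c (x, y) := fun x =>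
    hc.comp (continuous_const.prodMk continuous_id)
  have hAx : ∀ (ζ : Fin A → ℝ) (x : X),
      Continuous fun y => (∑ a, ζ a * f y a) - ε⁻¹ * c (x, y) := fun ζ x =>
    (hsum ζ).sub (continuous_const.mul (hcy x))
  set G : (Fin A → ℝ) → X → ℝ := fun ζ x =>
    Real.log (∫ y, Real.exp ((∑ a, ζ a * f y a) - ε⁻¹ * c (x, y)) ∂μ2) with hG
  have hIpos : ∀ (ζ : Fin A → ℝ) (x : X),
      0 < ∫ y, Real.exp ((∑ a, ζ a * f y a) - ε⁻¹ * c (x, y)) ∂μ2 := fun ζ x =>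
    integral_exp_pos (cont_integrable μ2 (Real.continuous_exp.comp (hAx ζ x)))
  have hGcont : ∀ ζ, Continuous (G ζ) := by
    intro ζ
    have hI : Continuous fun x => ∫ y, Real.exp ((∑ a, ζ a * f y a) - ε⁻¹ * c (x, y)) ∂μ2 := by
      apply continuous_of_dominated (bound := fun y => Real.exp (∑ a, ζ a * f y a))
      · intro x
        exact (Real.continuous_exp.comp (hAx ζ x)).aestronglyMeasurable
      · intro x
        filter_upwards with y
        rw [Real.norm_eq_abs, abs_of_pos (Real.exp_pos _)]
        apply Real.exp_le_exp.mpr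
        have h1 : 0 ≤ ε⁻¹ * c (x, y) := mul_nonneg (inv_nonneg.mpr hε.le) (hc0 (x, y))
        linarith
      · exact cont_integrable μ2 (Real.continuous_exp.comp (hsum ζ))
      · filter_upwards with y
        exact Real.continuous_exp.comp (continuous_const.sub
          (continuous_const.mul (hc.comp (continuous_id.prodMk continuous_const))))
    exact hI.log fun x => (hIpos ζ x).ne'
  have hGint : ∀ ζ, Integrable (G ζ) μ1 := fun ζ => cont_integrable μ1 (hGcont ζ)
  refine ⟨convex_univ, fun ζ1 _ ζ2 _ hne t s ht hs hts => ?_⟩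
  have hpt : ∀ (x : X) (y : Y), ((∑ a, (t • ζ1 + s • ζ2) a * f y a) - ε⁻¹ * c (x, y))
      = t * ((∑ a, ζ1 a * f y a) - ε⁻¹ * c (x, y))
        + s * ((∑ a, ζ2 a * f y a) - ε⁻¹ * c (x, y)) := by
    intro x y
    have h1 : (∑ a, (t • ζ1 + s • ζ2) a * f y a)
        = t * (∑ a, ζ1 a * f y a) + s * (∑ a, ζ2 a * f y a) := by
      rw [Finset.mul_sum, Finset.mul_sum, ← Finset.sum_add_distrib]
      refine Finset.sum_congr rfl fun a _ => ?_
      simp only [Pi.add_apply, Pi.smul_apply, smul_eq_mul]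
      ring
    rw [h1]
    linear_combination (ε⁻¹ * c (x, y)) * hts
  have hmain : ∀ x, G (t • ζ1 + s • ζ2) x < t * G ζ1 x + s * G ζ2 x := by
    intro x
    have hnex : ¬ ∃ k : ℝ, ∀ᵐ y ∂μ2,
        ((∑ a, ζ1 a * f y a) - ε⁻¹ * c (x, y))
          - ((∑ a, ζ2 a * f y a) - ε⁻¹ * c (x, y)) = k := by
      rintro ⟨k, hk⟩
      refine hnd (ζ1 - ζ2) (sub_ne_zero.mpr hne) ⟨k, ?_⟩
      filter_upwards [hk] with y hy
      have : (∑ a, (ζ1 - ζ2) a * f y a) = (∑ a, ζ1 a * f y a) - (∑ a, ζ2 a * f y a) := by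
        rw [← Finset.sum_sub_distrib]
        refine Finset.sum_congr rfl fun a _ => ?_
        simp only [Pi.sub_apply]; ring
      rw [this]; linarith
    have := log_integral_exp_combo_lt μ2 (hAx ζ1 x) (hAx ζ2 x) ht hs hts hnex
    simp only [hG]
    simp only [hpt x]
    exact this
  have hlt := integral_lt_of_forall_lt (hGint (t • ζ1 + s • ζ2))
    (((hGint ζ1).const_mul t).add ((hGint ζ2).const_mul s)) hmain
  simp only [Pi.add_apply] at hlt
  rw [integral_add ((hGint ζ1).const_mul t) ((hGint ζ2).const_mul s),
    integral_const_mul, integral_const_mul] at hlt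
  simp only [smul_eq_mul]
  rw [hJ, hJ, hJ]
  exact hlt
end
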